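/- Let A₁ and A₂ be standard operator algebras on complex Banach spaces X₁ and X₂ of dimension at least two, let r, s be nonnegative integers with r + s ≥ 1, and let Φ : A₁ → A₂ be a map whose range contains all operators of rank at most two and which satisfies σ_π(B^r A B^s) = σ_π(Φ(B)^r Φ(A) Φ(B)^s) for all A, B ∈ A₁. Then Φ is linear, i.e. Φ(A + B) = Φ(A) + Φ(B) and Φ(αA) = αΦ(A) for all A, B ∈ A₁ and all α ∈ ℂ; consequently Φ is injective. -/

import Mathlib

open scoped ENNReal

/-- The peripheral spectrum of a bounded linear operator on a complex Banach space:
the set of spectral values of maximal modulus. -/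
noncomputable def periSpec {X : Type*} [NormedAddCommGroup X] [NormedSpace ℂ X]
    (T : X →L[ℂ] X) : Set ℂ :=
  {z | z ∈ spectrum ℂ T ∧ (‖z‖₊ : ℝ≥0∞) = spectralRadius ℂ T}

section Aux

open scoped Cardinal

variable {X : Type*} [NormedAddCommGroup X] [NormedSpace ℂ X]

lemma aux_eig_mem_spectrum {N : X →L[ℂ] X} {x : X} {μ : ℂ} (hx : x ≠ 0) (h : N x = μ • x) :
    μ ∈ spectrum ℂ N := by
  rw [spectrum.mem_iff]
  rintro ⟨u, hu⟩
  apply hx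
  have h0 : (algebraMap ℂ (X →L[ℂ] X) μ - N) x = 0 := by
    simp [Algebra.algebraMap_eq_smul_one, ContinuousLinearMap.sub_apply, h]
  have : ((u⁻¹ : (X →L[ℂ] X)ˣ) : X →L[ℂ] X) ((algebraMap ℂ (X →L[ℂ] X) μ - N) x) = x := by
    rw [← hu, ← ContinuousLinearMap.mul_apply, u.inv_mul, ContinuousLinearMap.one_apply]
  rw [h0, map_zero] at this
  exact this.symm

lemma aux_not_mem_spectrum {N v : X →L[ℂ] X} {z c : ℂ} (hc : c ≠ 0)
    (h1 : (algebraMap ℂ (X →L[ℂ] X) z - N) * v = c • 1)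
    (h2 : v * (algebraMap ℂ (X →L[ℂ] X) z - N) = c • 1) : z ∉ spectrum ℂ N := by
  rw [spectrum.mem_iff, not_not]
  refine ⟨⟨algebraMap ℂ (X →L[ℂ] X) z - N, c⁻¹ • v, ?_, ?_⟩, rfl⟩
  · rw [mul_smul_comm, h1, smul_smul, inv_mul_cancel₀ hc, one_smul]
  · rw [smul_mul_assoc, h2, smul_smul, inv_mul_cancel₀ hc, one_smul]

lemma aux_spectrum_subset_pair (N : X →L[ℂ] X) (μ : ℂ) (h : N * N = μ • N) :
    spectrum ℂ N ⊆ {0, μ} := by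
  intro z hz
  by_contra hz'
  simp only [Set.mem_insert_iff, Set.mem_singleton_iff, not_or] at hz'
  obtain ⟨hz0, hzμ⟩ := hz'
  refine aux_not_mem_spectrum (N := N) (v := (μ - z) • (1 : X →L[ℂ] X) - N)
      (z := z) (c := z * (μ - z)) ?_ ?_ ?_ hz
  · exact mul_ne_zero hz0 (sub_ne_zero.mpr fun hh => hzμ hh.symm)
  · rw [Algebra.algebraMap_eq_smul_one]
    simp only [sub_mul, mul_sub, smul_mul_assoc, mul_smul_comm, one_mul, mul_one, h]
    module
  · rw [Algebra.algebraMap_eq_smul_one]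
    simp only [sub_mul, mul_sub, smul_mul_assoc, mul_smul_comm, one_mul, mul_one, h]
    module

lemma aux_spectrum_subset_cubic (N : X →L[ℂ] X) (h : N * (N * N) = N) :
    spectrum ℂ N ⊆ {0, 1, -1} := by
  intro z hz
  by_contra hz'
  simp only [Set.mem_insert_iff, Set.mem_singleton_iff, not_or] at hz'
  obtain ⟨hz0, hz1, hzm1⟩ := hz'
  have hc : z ^ 3 - z ≠ 0 := by
    have : z ^ 3 - z = z * (z - 1) * (z + 1) := by ring
    rw [this]
    exact mul_ne_zero (mul_ne_zero hz0 (sub_ne_zero.mpr hz1))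
      (by simpa [add_eq_zero_iff_eq_neg] using hzm1)
  refine aux_not_mem_spectrum (N := N)
      (v := N * N + z • N + (z ^ 2 - 1) • (1 : X →L[ℂ] X)) (z := z) (c := z ^ 3 - z)
      hc ?_ ?_ hz
  · rw [Algebra.algebraMap_eq_smul_one]
    simp only [sub_mul, mul_sub, mul_add, add_mul, smul_mul_assoc, mul_smul_comm, one_mul,
      mul_one, ← mul_assoc]
    rw [show N * N * N = N from by rw [mul_assoc, h]]
    module
  · rw [Algebra.algebraMap_eq_smul_one]
    simp only [sub_mul, mul_sub, mul_add, add_mul, smul_mul_assoc, mul_smul_comm, one_mul,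
      mul_one, ← mul_assoc]
    rw [show N * N * N = N from by rw [mul_assoc, h]]
    module

lemma aux_biSup_diff (S : Set ℂ) :
    (⨆ z ∈ S, (‖z‖₊ : ℝ≥0∞)) = ⨆ z ∈ S \ {0}, (‖z‖₊ : ℝ≥0∞) := by
  apply le_antisymm
  · refine iSup₂_le fun z hz => ?_
    rcases eq_or_ne z 0 with rfl | h
    · simp
    · exact le_iSup₂ (f := fun (z : ℂ) (_ : z ∈ S \ {0}) => (‖z‖₊ : ℝ≥0∞)) z ⟨hz, h⟩
  · exact iSup₂_le fun z hz =>
      le_iSup₂ (f := fun (z : ℂ) (_ : z ∈ S) => (‖z‖₊ : ℝ≥0∞)) z hz.1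

lemma aux_radius_swap (a b : X →L[ℂ] X) :
    spectralRadius ℂ (a * b) = spectralRadius ℂ (b * a) := by
  rw [spectralRadius, spectralRadius, aux_biSup_diff (spectrum ℂ (a * b)),
    spectrum.nonzero_mul_comm, ← aux_biSup_diff]

lemma aux_periSpec_singleton [CompleteSpace X] [Nontrivial X]
    (B A : X →L[ℂ] X) (r s : ℕ) (w : X) (hw : w ≠ 0) (h₀ : X → ℂ)
    (hB : ∀ x, (B ^ (r + s)) x = h₀ x • w) :
    periSpec (B ^ r * A * B ^ s) = {h₀ (A w)} := by
  unfold periSpec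
  set M := B ^ r * A * B ^ s with hM
  set N := B ^ (r + s) * A with hN
  have hNeq : B ^ s * (B ^ r * A) = N := by
    rw [hN, ← mul_assoc, ← pow_add, add_comm s r]
  have hswap : spectrum ℂ M \ {0} = spectrum ℂ N \ {0} := by
    have h' := spectrum.nonzero_mul_comm (𝕜 := ℂ) (B ^ r * A) (B ^ s)
    rw [hNeq] at h'
    exact h'
  have hrad : spectralRadius ℂ M = spectralRadius ℂ N := by
    have h' := aux_radius_swap (B ^ r * A) (B ^ s)
    rw [hNeq] at h'
    exact h'
  set lam := h₀ (A w) with hlam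
  have hNx : ∀ x, N x = h₀ (A x) • w := fun x => by
    rw [hN, ContinuousLinearMap.mul_apply, hB]
  have hNN : N * N = lam • N := by
    ext x
    rw [ContinuousLinearMap.mul_apply, ContinuousLinearMap.smul_apply, hNx x,
      show N (h₀ (A x) • w) = h₀ (A x) • N w from map_smul N _ _, hNx w, ← hlam,
      smul_smul, smul_smul, mul_comm]
  have hsub : spectrum ℂ N ⊆ {0, lam} := aux_spectrum_subset_pair N lam hNN
  rcases eq_or_ne lam 0 with hlam0 | hlam0
  · have hsub' : spectrum ℂ N ⊆ {0} := by rw [hlam0] at hsub; simpa using hsub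
    have hMsub : spectrum ℂ M ⊆ {0} := by
      intro z hz
      rcases eq_or_ne z 0 with rfl | hz0
      · rfl
      · have hmem : z ∈ spectrum ℂ N \ {0} := by rw [← hswap]; exact ⟨hz, hz0⟩
        exact absurd (hsub' hmem.1) hz0
    have hM0 : (0 : ℂ) ∈ spectrum ℂ M := by
      obtain ⟨z, hz⟩ := spectrum.nonempty M
      rwa [← hMsub hz]
    have hradM : spectralRadius ℂ M = 0 := by
      rw [spectralRadius]
      refine le_antisymm (iSup₂_le fun z hz => ?_) zero_le
      rw [Set.mem_singleton_iff.mp (hMsub hz)]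
      simp
    ext z
    simp only [Set.mem_setOf_eq, Set.mem_singleton_iff, hradM, ← hlam, hlam0]
    constructor
    · rintro ⟨hz, -⟩
      exact hMsub hz
    · rintro rfl
      exact ⟨hM0, by simp⟩
  · have hNw : N w = lam • w := by rw [hNx w]
    have hlamN : lam ∈ spectrum ℂ N := aux_eig_mem_spectrum hw hNw
    have hlamM : lam ∈ spectrum ℂ M := by
      have : lam ∈ spectrum ℂ M \ {0} := by rw [hswap]; exact ⟨hlamN, hlam0⟩
      exact this.1
    have hradN : spectralRadius ℂ N = (‖lam‖₊ : ℝ≥0∞) := by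
      rw [spectralRadius]
      apply le_antisymm
      · refine iSup₂_le fun z hz => ?_
        rcases hsub hz with rfl | h
        · simp
        · rw [Set.mem_singleton_iff.mp h]
      · exact le_iSup₂ (f := fun (z : ℂ) (_ : z ∈ spectrum ℂ N) => (‖z‖₊ : ℝ≥0∞)) lam hlamN
    have hradM : spectralRadius ℂ M = (‖lam‖₊ : ℝ≥0∞) := by rw [hrad, hradN]
    ext z
    simp only [Set.mem_setOf_eq, Set.mem_singleton_iff, hradM, ← hlam]
    constructor
    · rintro ⟨hz, hnorm⟩
      have hz0 : z ≠ 0 := by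
        intro hzz
        rw [hzz] at hnorm
        simp only [nnnorm_zero, ENNReal.coe_zero] at hnorm
        exact hlam0 (by simpa using (nnnorm_eq_zero.mp (by exact_mod_cast hnorm.symm)))
      have hmem : z ∈ spectrum ℂ N \ {0} := by rw [← hswap]; exact ⟨hz, hz0⟩
      rcases hsub hmem.1 with rfl | h
      · exact absurd rfl hz0
      · exact Set.mem_singleton_iff.mp h
    · rintro rfl
      exact ⟨hlamM, rfl⟩

lemma aux_exists_dual_one {v : X} (hv : v ≠ 0) : ∃ f : X →L[ℂ] ℂ, f v = 1 := by
  obtain ⟨g, -, hg⟩ := exists_dual_vector ℂ v (norm_ne_zero_iff.mpr hv)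
  refine ⟨(‖v‖ : ℂ)⁻¹ • g, ?_⟩
  rw [ContinuousLinearMap.smul_apply, hg, smul_eq_mul]
  exact inv_mul_cancel₀ (by exact_mod_cast norm_ne_zero_iff.mpr hv)

lemma aux_exists_dual_pair {v₁ v₂ : X} (h : LinearIndependent ℂ ![v₁, v₂]) :
    ∃ f₁ f₂ : X →L[ℂ] ℂ, f₁ v₁ = 1 ∧ f₁ v₂ = 0 ∧ f₂ v₁ = 0 ∧ f₂ v₂ = 1 := by
  have hfin := linearIndependent_fin2.mp h
  have hv₂ : v₂ ≠ 0 := by simpa using hfin.1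
  have hnenot : ∀ a : ℂ, a • v₂ ≠ v₁ := by simpa using hfin.2
  have hv₁ : v₁ ≠ 0 := by
    intro h0
    exact hnenot 0 (by simp [h0])
  obtain ⟨f, hf⟩ := aux_exists_dual_one hv₁
  have hu : v₂ - f v₂ • v₁ ≠ 0 := by
    intro h0
    have hv2eq : v₂ = f v₂ • v₁ := sub_eq_zero.mp h0
    rcases eq_or_ne (f v₂) 0 with h1 | h1
    · rw [h1, zero_smul] at hv2eq
      exact hv₂ hv2eq
    · refine hnenot (f v₂)⁻¹ ?_
      calc (f v₂)⁻¹ • v₂ = (f v₂)⁻¹ • (f v₂ • v₁) := by rw [← hv2eq]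
        _ = v₁ := by rw [smul_smul, inv_mul_cancel₀ h1, one_smul]
  obtain ⟨f', hf'⟩ := aux_exists_dual_one hu
  have base : f' v₂ - f v₂ * f' v₁ = 1 := by
    have h' := hf'
    rw [map_sub, map_smul, smul_eq_mul] at h'
    linear_combination h'
  refine ⟨f - f v₂ • (f' - f' v₁ • f), f' - f' v₁ • f, ?_, ?_, ?_, ?_⟩
  · simp only [ContinuousLinearMap.sub_apply, ContinuousLinearMap.smul_apply, hf, smul_eq_mul]
    ring
  · simp only [ContinuousLinearMap.sub_apply, ContinuousLinearMap.smul_apply, smul_eq_mul]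
    linear_combination (- f v₂) * base
  · simp only [ContinuousLinearMap.sub_apply, ContinuousLinearMap.smul_apply, hf, smul_eq_mul]
    ring
  · simp only [ContinuousLinearMap.sub_apply, ContinuousLinearMap.smul_apply, smul_eq_mul]
    linear_combination base

lemma aux_clm_ext {T T' : X →L[ℂ] X}
    (h : ∀ y : X, y ≠ 0 → ∀ g : X →L[ℂ] ℂ, g y = 1 → g (T y) = g (T' y)) : T = T' := by
  ext y
  rcases eq_or_ne y 0 with rfl | hy
  · simp
  by_contra hne
  have hdne : T y - T' y ≠ 0 := sub_ne_zero.mpr hne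
  set d := T y - T' y with hd
  have key : ∀ g : X →L[ℂ] ℂ, g y = 1 → g d = 0 := by
    intro g hg
    rw [hd, map_sub, h y hy g hg, sub_self]
  by_cases hli : LinearIndependent ℂ ![y, d]
  · obtain ⟨f₁, f₂, h11, h12, h21, h22⟩ := aux_exists_dual_pair hli
    have := key (f₁ + f₂) (by rw [ContinuousLinearMap.add_apply, h11, h21, add_zero])
    rw [ContinuousLinearMap.add_apply, h12, h22, zero_add] at this
    exact one_ne_zero this
  · rw [linearIndependent_fin2] at hli
    push_neg at hli
    simp only [Matrix.cons_val_one, Matrix.head_cons, Matrix.cons_val_zero] at hli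
    obtain ⟨a, ha⟩ := hli hdne
    have ha0 : a ≠ 0 := by
      intro h0
      rw [h0, zero_smul] at ha
      exact hy ha.symm
    obtain ⟨g, hg⟩ := aux_exists_dual_one hy
    have hgd : g d = 0 := key g hg
    have : g (a • d) = 1 := by rw [ha, hg]
    rw [map_smul, smul_eq_mul, hgd, mul_zero] at this
    exact zero_ne_one this

lemma aux_rank_le_two (T : X →L[ℂ] X) (u₁ u₂ : X)
    (h : ∀ x, T x ∈ Submodule.span ℂ {u₁, u₂}) :
    LinearMap.rank (T : X →ₗ[ℂ] X) ≤ 2 := by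
  have hle : LinearMap.range (T : X →ₗ[ℂ] X) ≤ Submodule.span ℂ {u₁, u₂} := by
    rintro _ ⟨x, rfl⟩
    exact h x
  calc LinearMap.rank (T : X →ₗ[ℂ] X)
      ≤ Module.rank ℂ (Submodule.span ℂ {u₁, u₂}) := Submodule.rank_mono hle
    _ ≤ #({u₁, u₂} : Set X) := rank_span_le _
    _ ≤ 2 := by
        refine (Cardinal.mk_insert_le).trans ?_
        rw [Cardinal.mk_singleton]
        norm_num

lemma aux_two_lt_aleph0 : (2 : Cardinal) < Cardinal.aleph0 := by
  exact_mod_cast Cardinal.nat_lt_aleph0 2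

lemma aux_smulRight_pow_apply {x : X} {f : X →L[ℂ] ℂ} (hfx : f x = 1) {n : ℕ} (hn : 1 ≤ n)
    (z : X) : ((f.smulRight x) ^ n) z = f z • x := by
  have hidem : IsIdempotentElem (f.smulRight x) := by
    show f.smulRight x * f.smulRight x = f.smulRight x
    ext z
    simp [ContinuousLinearMap.mul_apply, ContinuousLinearMap.smulRight_apply, map_smul,
      smul_smul, hfx]
  have hpow : (f.smulRight x) ^ n = f.smulRight x := by
    conv_lhs => rw [show n = (n - 1) + 1 from (Nat.succ_pred_eq_of_pos hn).symm]
    exact hidem.pow_succ_eq (n - 1)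
  rw [hpow, ContinuousLinearMap.smulRight_apply]

lemma aux_smulRight_rank_le (x : X) (f : X →L[ℂ] ℂ) :
    LinearMap.rank ((f.smulRight x : X →L[ℂ] X) : X →ₗ[ℂ] X) ≤ 2 := by
  refine aux_rank_le_two _ x x fun z => ?_
  rw [ContinuousLinearMap.smulRight_apply]
  exact Submodule.smul_mem _ _ (Submodule.subset_span (by simp))

end Aux

/-- Claim 3 in the proof of Theorem 2.2: if `Φ` is a map between standard operator algebras
on complex Banach spaces of dimension at least two whose range contains all operators of
rank at most two and which preserves the peripheral spectrum of the products `B^r A B^s`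
(`r + s ≥ 1`), then `Φ` is additive and homogeneous, hence linear, and consequently
injective. -/
theorem periSpec_sandwich_preserver_linear {X₁ X₂ : Type*}
    [NormedAddCommGroup X₁] [NormedSpace ℂ X₁] [CompleteSpace X₁]
    [NormedAddCommGroup X₂] [NormedSpace ℂ X₂] [CompleteSpace X₂]
    (hdim₁ : 2 ≤ Module.rank ℂ X₁) (hdim₂ : 2 ≤ Module.rank ℂ X₂)
    (A₁ : NonUnitalSubalgebra ℂ (X₁ →L[ℂ] X₁))
    (A₂ : NonUnitalSubalgebra ℂ (X₂ →L[ℂ] X₂))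
    (hA₁ : ∀ T : X₁ →L[ℂ] X₁, LinearMap.rank (T : X₁ →ₗ[ℂ] X₁) < Cardinal.aleph0 → T ∈ A₁)
    (hA₂ : ∀ T : X₂ →L[ℂ] X₂, LinearMap.rank (T : X₂ →ₗ[ℂ] X₂) < Cardinal.aleph0 → T ∈ A₂)
    (r s : ℕ) (hrs : 1 ≤ r + s)
    (Φ : A₁ → A₂)
    (hrange : ∀ T : X₂ →L[ℂ] X₂, LinearMap.rank (T : X₂ →ₗ[ℂ] X₂) ≤ 2 →
      ∃ A : A₁, (Φ A : X₂ →L[ℂ] X₂) = T)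
    (hpres : ∀ A B : A₁,
      periSpec ((B : X₁ →L[ℂ] X₁) ^ r * (A : X₁ →L[ℂ] X₁) * (B : X₁ →L[ℂ] X₁) ^ s)
        = periSpec ((Φ B : X₂ →L[ℂ] X₂) ^ r * (Φ A : X₂ →L[ℂ] X₂)
            * (Φ B : X₂ →L[ℂ] X₂) ^ s)) :
    (∀ A B : A₁, Φ (A + B) = Φ A + Φ B) ∧
    (∀ (α : ℂ) (A : A₁), Φ (α • A) = α • Φ A) ∧
    Function.Injective Φ := by
  haveI nt₁ : Nontrivial X₁ :=
    rank_pos_iff_nontrivial.mp (lt_of_lt_of_le (by norm_num) hdim₁)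
  haveI nt₂ : Nontrivial X₂ :=
    rank_pos_iff_nontrivial.mp (lt_of_lt_of_le (by norm_num) hdim₂)
  -- main functional representation
  have main : ∀ (y : X₂) (g : X₂ →L[ℂ] ℂ), y ≠ 0 → g y = 1 →
      ∃ (w : X₁) (h₀ : X₁ → ℂ),
        (∀ x₁ x₂ : X₁, h₀ (x₁ + x₂) = h₀ x₁ + h₀ x₂) ∧
        (∀ (c : ℂ) (x : X₁), h₀ (c • x) = c * h₀ x) ∧
        (∀ A : A₁, g ((Φ A : X₂ →L[ℂ] X₂) y) = h₀ ((A : X₁ →L[ℂ] X₁) w)) := by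
    intro y g hy hgy
    set Q : X₂ →L[ℂ] X₂ := g.smulRight y with hQ
    obtain ⟨B, hBQ⟩ := hrange Q (aux_smulRight_rank_le y g)
    have hQpow : ∀ z, (Q ^ (r + s)) z = g z • y := fun z =>
      aux_smulRight_pow_apply hgy hrs z
    have hRHS : ∀ A : A₁,
        periSpec ((Φ B : X₂ →L[ℂ] X₂) ^ r * (Φ A : X₂ →L[ℂ] X₂) * (Φ B : X₂ →L[ℂ] X₂) ^ s)
          = {g ((Φ A : X₂ →L[ℂ] X₂) y)} := by
      intro A
      rw [hBQ]
      exact aux_periSpec_singleton Q _ r s y hy (fun z => g z) hQpow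
    have hLHS : ∀ A : A₁,
        periSpec ((B : X₁ →L[ℂ] X₁) ^ r * (A : X₁ →L[ℂ] X₁) * (B : X₁ →L[ℂ] X₁) ^ s)
          = {g ((Φ A : X₂ →L[ℂ] X₂) y)} := fun A => by rw [hpres A B, hRHS]
    set T : X₁ →L[ℂ] X₁ := (B : X₁ →L[ℂ] X₁) ^ (r + s) with hT
    -- no two independent vectors in the range of T
    have hnoind : ∀ u₁ u₂ : X₁, ¬ LinearIndependent ℂ ![T u₁, T u₂] := by
      intro u₁ u₂ hli
      obtain ⟨f₁, f₂, h11, h12, h21, h22⟩ := aux_exists_dual_pair hli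
      set w₁ := T u₁ with hw₁def
      set w₂ := T u₂ with hw₂def
      have hw₁ : w₁ ≠ 0 := fun h0 => one_ne_zero (by rw [← h11, h0, map_zero])
      have hw₂ : w₂ ≠ 0 := fun h0 => one_ne_zero (by rw [← h22, h0, map_zero])
      set A₀ : X₁ →L[ℂ] X₁ := f₁.smulRight u₁ - f₂.smulRight u₂ with hA₀
      have hA₀mem : A₀ ∈ A₁ := by
        refine hA₁ _ (lt_of_le_of_lt (aux_rank_le_two A₀ u₁ u₂ fun z => ?_) aux_two_lt_aleph0)
        rw [hA₀, ContinuousLinearMap.sub_apply, ContinuousLinearMap.smulRight_apply,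
          ContinuousLinearMap.smulRight_apply]
        exact Submodule.sub_mem _
          (Submodule.smul_mem _ _ (Submodule.subset_span (by simp)))
          (Submodule.smul_mem _ _ (Submodule.subset_span (by simp)))
      set N : X₁ →L[ℂ] X₁ := T * A₀ with hNdef
      have hNx : ∀ z, N z = f₁ z • w₁ - f₂ z • w₂ := by
        intro z
        rw [hNdef, ContinuousLinearMap.mul_apply, hA₀, ContinuousLinearMap.sub_apply,
          ContinuousLinearMap.smulRight_apply, ContinuousLinearMap.smulRight_apply,
          map_sub, map_smul, map_smul]
      have hNw₁ : N w₁ = w₁ := by rw [hNx, h11, h21, one_smul, zero_smul, sub_zero]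
      have hNw₂ : N w₂ = -w₂ := by rw [hNx, h12, h22, one_smul, zero_smul, zero_sub]
      have hNN : ∀ z, N (N z) = f₁ z • w₁ + f₂ z • w₂ := by
        intro z
        rw [hNx z, map_sub, map_smul, map_smul, hNw₁, hNw₂, smul_neg, sub_neg_eq_add]
      have hN3 : N * (N * N) = N := by
        ext z
        show N ((N * N) z) = N z
        rw [show (N * N) z = N (N z) from rfl, hNN z, map_add, map_smul, map_smul,
          hNw₁, hNw₂, smul_neg, ← sub_eq_add_neg, ← hNx z]
      have hsub := aux_spectrum_subset_cubic N hN3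
      have h1mem : (1 : ℂ) ∈ spectrum ℂ N :=
        aux_eig_mem_spectrum hw₁ (by rw [hNw₁, one_smul])
      have hm1mem : (-1 : ℂ) ∈ spectrum ℂ N :=
        aux_eig_mem_spectrum hw₂ (by rw [hNw₂, neg_smul, one_smul])
      set M : X₁ →L[ℂ] X₁ :=
        (B : X₁ →L[ℂ] X₁) ^ r * A₀ * (B : X₁ →L[ℂ] X₁) ^ s with hMdef
      have hNeq : (B : X₁ →L[ℂ] X₁) ^ s * ((B : X₁ →L[ℂ] X₁) ^ r * A₀) = N := by
        rw [hNdef, hT, ← mul_assoc, ← pow_add, add_comm s r]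
      have hswap : spectrum ℂ M \ {0} = spectrum ℂ N \ {0} := by
        have h' := spectrum.nonzero_mul_comm (𝕜 := ℂ)
          ((B : X₁ →L[ℂ] X₁) ^ r * A₀) ((B : X₁ →L[ℂ] X₁) ^ s)
        rw [hNeq] at h'
        exact h'
      have hrad : spectralRadius ℂ M = spectralRadius ℂ N := by
        have h' := aux_radius_swap ((B : X₁ →L[ℂ] X₁) ^ r * A₀) ((B : X₁ →L[ℂ] X₁) ^ s)
        rw [hNeq] at h'
        exact h'
      have hradN : spectralRadius ℂ N = 1 := by
        rw [spectralRadius]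
        apply le_antisymm
        · refine iSup₂_le fun z hz => ?_
          rcases hsub hz with rfl | h
          · simp
          · rcases h with rfl | h
            · simp
            · rw [Set.mem_singleton_iff.mp h]; simp
        · have := le_iSup₂
            (f := fun (z : ℂ) (_ : z ∈ spectrum ℂ N) => (‖z‖₊ : ℝ≥0∞)) 1 h1mem
          simpa using this
      have h1p : (1 : ℂ) ∈ periSpec M := by
        refine ⟨?_, by rw [hrad, hradN]; simp⟩
        have : (1 : ℂ) ∈ spectrum ℂ M \ {0} := by
          rw [hswap]; exact ⟨h1mem, one_ne_zero⟩
        exact this.1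
      have hm1p : (-1 : ℂ) ∈ periSpec M := by
        refine ⟨?_, by rw [hrad, hradN]; simp⟩
        have : (-1 : ℂ) ∈ spectrum ℂ M \ {0} := by
          rw [hswap]; exact ⟨hm1mem, by norm_num⟩
        exact this.1
      have hsing := hLHS ⟨A₀, hA₀mem⟩
      rw [hsing] at h1p hm1p
      rw [Set.mem_singleton_iff] at h1p hm1p
      exact (by norm_num : (1 : ℂ) ≠ -1) (h1p.trans hm1p.symm)
    -- T ≠ 0
    have hTne : ∃ u₀, T u₀ ≠ 0 := by
      by_contra hc
      push_neg at hc
      obtain ⟨x₀, hx₀⟩ := exists_ne (0 : X₁)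
      have h0 := hLHS B
      rw [aux_periSpec_singleton (B : X₁ →L[ℂ] X₁) (B : X₁ →L[ℂ] X₁) r s x₀ hx₀
        (fun _ => 0) (fun z => by rw [show ((B : X₁ →L[ℂ] X₁) ^ (r + s)) z = 0 from hc z,
          zero_smul])] at h0
      have hgB : g ((Φ B : X₂ →L[ℂ] X₂) y) = 1 := by
        rw [hBQ, hQ, ContinuousLinearMap.smulRight_apply, hgy, one_smul, hgy]
      rw [hgB] at h0
      exact zero_ne_one (Set.singleton_eq_singleton_iff.mp h0)
    obtain ⟨u₀, hu₀⟩ := hTne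
    set w := T u₀ with hwdef
    have hcoeff : ∀ x, ∃ a : ℂ, T x = a • w := by
      intro x
      have hni := hnoind x u₀
      rw [linearIndependent_fin2] at hni
      push_neg at hni
      simp only [Matrix.cons_val_one, Matrix.head_cons, Matrix.cons_val_zero] at hni
      obtain ⟨a, ha⟩ := hni hu₀
      exact ⟨a, ha.symm⟩
    choose h₀ hh₀ using hcoeff
    have hinj : Function.Injective fun c : ℂ => c • w := smul_left_injective ℂ hu₀
    have hadd : ∀ x₁ x₂ : X₁, h₀ (x₁ + x₂) = h₀ x₁ + h₀ x₂ := by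
      intro x₁ x₂
      apply hinj
      show h₀ (x₁ + x₂) • w = (h₀ x₁ + h₀ x₂) • w
      rw [← hh₀, map_add, hh₀, hh₀, add_smul]
    have hsmul : ∀ (c : ℂ) (x : X₁), h₀ (c • x) = c * h₀ x := by
      intro c x
      apply hinj
      show h₀ (c • x) • w = (c * h₀ x) • w
      rw [← hh₀, map_smul, hh₀, smul_smul]
    refine ⟨w, h₀, hadd, hsmul, ?_⟩
    intro A
    have h1 := hLHS A
    rw [aux_periSpec_singleton (B : X₁ →L[ℂ] X₁) (A : X₁ →L[ℂ] X₁) r s w hu₀ h₀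
      (fun z => hh₀ z)] at h1
    exact (Set.singleton_eq_singleton_iff.mp h1).symm
  -- additivity
  have hAdd : ∀ A B : A₁, Φ (A + B) = Φ A + Φ B := by
    intro A A'
    have hco : ((Φ (A + A') : X₂ →L[ℂ] X₂)) = (Φ A : X₂ →L[ℂ] X₂) + (Φ A' : X₂ →L[ℂ] X₂) := by
      apply aux_clm_ext
      intro y hy g hgy
      obtain ⟨w, h₀, hadd, hsmul, hfor⟩ := main y g hy hgy
      rw [hfor (A + A')]
      have hc : ((A + A' : A₁) : X₁ →L[ℂ] X₁) = (A : X₁ →L[ℂ] X₁) + (A' : X₁ →L[ℂ] X₁) := rfl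
      rw [hc, ContinuousLinearMap.add_apply, hadd, ← hfor A, ← hfor A',
        ContinuousLinearMap.add_apply, map_add]
    exact Subtype.ext hco
  refine ⟨hAdd, ?_, ?_⟩
  · -- homogeneity
    intro α A
    have hco : ((Φ (α • A) : X₂ →L[ℂ] X₂)) = α • (Φ A : X₂ →L[ℂ] X₂) := by
      apply aux_clm_ext
      intro y hy g hgy
      obtain ⟨w, h₀, hadd, hsmul, hfor⟩ := main y g hy hgy
      rw [hfor (α • A)]
      have hc : ((α • A : A₁) : X₁ →L[ℂ] X₁) = α • (A : X₁ →L[ℂ] X₁) := rfl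
      rw [hc, ContinuousLinearMap.smul_apply, hsmul, ← hfor A,
        ContinuousLinearMap.smul_apply, map_smul, smul_eq_mul]
    exact Subtype.ext hco
  · -- injectivity
    intro A A' hAA'
    have hco : (A : X₁ →L[ℂ] X₁) = (A' : X₁ →L[ℂ] X₁) := by
      apply aux_clm_ext
      intro x hx f hfx
      set P : X₁ →L[ℂ] X₁ := f.smulRight x with hP
      have hPmem : P ∈ A₁ :=
        hA₁ _ (lt_of_le_of_lt (aux_smulRight_rank_le x f) aux_two_lt_aleph0)
      set Bp : A₁ := ⟨P, hPmem⟩ with hBp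
      have hPpow : ∀ z, (P ^ (r + s)) z = f z • x := fun z =>
        aux_smulRight_pow_apply hfx hrs z
      have e1 : periSpec ((Bp : X₁ →L[ℂ] X₁) ^ r * (A : X₁ →L[ℂ] X₁)
          * (Bp : X₁ →L[ℂ] X₁) ^ s) = {f ((A : X₁ →L[ℂ] X₁) x)} :=
        aux_periSpec_singleton P _ r s x hx (fun z => f z) hPpow
      have e2 : periSpec ((Bp : X₁ →L[ℂ] X₁) ^ r * (A' : X₁ →L[ℂ] X₁)
          * (Bp : X₁ →L[ℂ] X₁) ^ s) = {f ((A' : X₁ →L[ℂ] X₁) x)} :=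
        aux_periSpec_singleton P _ r s x hx (fun z => f z) hPpow
      have hp1 := hpres A Bp
      have hp2 := hpres A' Bp
      rw [hAA'] at hp1
      rw [e1] at hp1
      rw [e2] at hp2
      rw [← hp2] at hp1
      exact Set.singleton_eq_singleton_iff.mp hp1
    exact Subtype.ext hco
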